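/- Let X = X* + E, where X*, E ∈ ℝ^{m×n} and X* has rank at most r. Let X_r ∈ ℝ^{m×n} be a best rank-r approximation of X in spectral norm, i.e., X_r has rank at most r and ‖X − X_r‖_op ≤ ‖X − M‖_op for every matrix M ∈ ℝ^{m×n} of rank at most r (in particular, the top-r SVD truncation of X has this property). Then ‖X_r − X*‖_F ≤ 2√(2r)·‖E‖_op. -/

import Mathlib

open scoped BigOperators
open Matrix MeasureTheory

noncomputable section

/-- Euclidean (ℓ₂) norm of a finitely-indexed real vector. -/
def enorm2 {ι : Type*} [Fintype ι] (v : ι → ℝ) : ℝ := Real.sqrt (∑ i, v i ^ 2)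

/-- Normalize a vector to unit ℓ₂ norm (junk value `0` if `v = 0`). -/
def unitize {ι : Type*} [Fintype ι] (v : ι → ℝ) : ι → ℝ := (enorm2 v)⁻¹ • v

/-- `sin θ` distance between two unit vectors: `√(1 − ⟨a,b⟩²)`. -/
def sinTheta {ι : Type*} [Fintype ι] (a b : ι → ℝ) : ℝ :=
  Real.sqrt (1 - (∑ i, a i * b i) ^ 2)

/-- A matrix has orthonormal columns: `Vᵀ V = I`. -/
def Orth {p r : ℕ} (V : Matrix (Fin p) (Fin r) ℝ) : Prop := Vᵀ * V = 1

/-- Smallest singular value of a square matrix: `inf_{‖v‖=1} ‖Mv‖`. -/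
def smallestSV {r : ℕ} (M : Matrix (Fin r) (Fin r) ℝ) : ℝ :=
  sInf {x | ∃ v : Fin r → ℝ, enorm2 v = 1 ∧ x = enorm2 (M.mulVec v)}

/-- `‖sinΘ(V₁, V₂)‖_op = √(1 − σ_r(V₁ᵀV₂)²)` for frames with orthonormal columns. -/
def sinThetaOp {p r : ℕ} (V₁ V₂ : Matrix (Fin p) (Fin r) ℝ) : ℝ :=
  Real.sqrt (1 - smallestSV (V₁ᵀ * V₂) ^ 2)

/-- Matrix spectral (operator) norm. -/
def mOpNorm {ι κ : Type*} [Fintype ι] [Fintype κ] (M : Matrix ι κ ℝ) : ℝ :=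
  sSup {x | ∃ v : κ → ℝ, enorm2 v = 1 ∧ x = enorm2 (M.mulVec v)}

/-- Matrix Frobenius norm. -/
def frobNorm {ι κ : Type*} [Fintype ι] [Fintype κ] (M : Matrix ι κ ℝ) : ℝ :=
  Real.sqrt (∑ i, ∑ j, M i j ^ 2)

/-- Operator norm of a third-order tensor. -/
def tOpNorm {p q N : ℕ} (T : Fin p → Fin q → Fin N → ℝ) : ℝ :=
  sSup {x | ∃ (v : Fin p → ℝ) (w : Fin q → ℝ) (z : Fin N → ℝ),
    enorm2 v = 1 ∧ enorm2 w = 1 ∧ enorm2 z = 1 ∧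
    x = ∑ i, ∑ j, ∑ k, T i j k * v i * w j * z k}

/-- A tensor in `ℝ^{p×p×N}` is semi-symmetric if every tslice is a symmetric matrix. -/
def SemiSym {p N : ℕ} (T : Fin p → Fin p → Fin N → ℝ) : Prop := ∀ i j k, T i j k = T j i k

/-- The k-th tslice `T_{:,:,k}` of a tensor. -/
def tslice {p q N : ℕ} (T : Fin p → Fin q → Fin N → ℝ) (k : Fin N) : Matrix (Fin p) (Fin q) ℝ :=
  Matrix.of fun i j => T i j k

/-- Mode-3 contraction `T ×₃ u`. -/
def mode3 {p q N : ℕ} (T : Fin p → Fin q → Fin N → ℝ) (u : Fin N → ℝ) :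
    Matrix (Fin p) (Fin q) ℝ :=
  Matrix.of fun i j => ∑ k, T i j k * u k

/-- Trace product `[T; V] ∈ ℝ^N`, with k-th entry `Tr(Vᵀ T_{:,:,k} V)`. -/
def traceProd {p N r : ℕ} (T : Fin p → Fin p → Fin N → ℝ) (V : Matrix (Fin p) (Fin r) ℝ) :
    Fin N → ℝ :=
  fun k => Matrix.trace (Vᵀ * tslice T k * V)

/-- Weighted trace product `[T; V, D] ∈ ℝ^N`, with k-th entry `Tr(D Vᵀ T_{:,:,k} V)`. -/
def traceProdD {p N r : ℕ} (T : Fin p → Fin p → Fin N → ℝ) (V : Matrix (Fin p) (Fin r) ℝ)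
    (D : Matrix (Fin r) (Fin r) ℝ) : Fin N → ℝ :=
  fun k => Matrix.trace (D * (Vᵀ * tslice T k * V))

/-- `V` is a matrix of left singular vectors of `A` associated with its `r` largest singular
values: `V` has orthonormal columns, each column is an eigenvector of `AAᵀ`, and the
corresponding eigenvalues dominate the Rayleigh quotient of `AAᵀ` on the orthogonal
complement of the column span. -/
def IsLeadingLeft {ι κ : Type*} [Fintype ι] [Fintype κ] {r : ℕ}
    (A : Matrix ι κ ℝ) (V : Matrix ι (Fin r) ℝ) : Prop :=
  Vᵀ * V = 1 ∧ ∃ μ : Fin r → ℝ,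
    (∀ i, (A * Aᵀ).mulVec (fun j => V j i) = μ i • fun j => V j i) ∧
    ∀ i, ∀ x : ι → ℝ, (∀ l, (∑ j, x j * V j l) = 0) →
      ∑ j, x j * (A * Aᵀ).mulVec x j ≤ μ i * ∑ j, x j ^ 2

/-- `v` is a leading (unit) left singular vector of `A`. -/
def IsLeadingLeftVec {ι κ : Type*} [Fintype ι] [Fintype κ]
    (A : Matrix ι κ ℝ) (v : ι → ℝ) : Prop :=
  enorm2 v = 1 ∧ ∃ μ : ℝ,
    (A * Aᵀ).mulVec v = μ • v ∧
    ∀ x : ι → ℝ, (∑ j, x j * v j) = 0 →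
      ∑ j, x j * (A * Aᵀ).mulVec x j ≤ μ * ∑ j, x j ^ 2

/-- The single-factor JisstPCA iteration (Algorithm 1): given `u⁽ᵗ⁾`, take `V⁽ᵗ⁺¹⁾`/`W⁽ᵗ⁺¹⁾`
to be leading singular vectors of the mode-3 contractions, then update `u⁽ᵗ⁺¹⁾` as the
normalized weighted combination of trace products. -/
def JisstIter {p q N rx ry : ℕ} (X : Fin p → Fin p → Fin N → ℝ) (Y : Fin q → Fin q → Fin N → ℝ)
    (lam : ℝ) (u : ℕ → Fin N → ℝ) (V : ℕ → Matrix (Fin p) (Fin rx) ℝ)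
    (W : ℕ → Matrix (Fin q) (Fin ry) ℝ) : Prop :=
  ∀ t : ℕ,
    IsLeadingLeft (mode3 X (u t)) (V (t + 1)) ∧
    IsLeadingLeft (mode3 Y (u t)) (W (t + 1)) ∧
    u (t + 1) =
      unitize (fun k => lam * traceProd X (V (t + 1)) k + (1 - lam) * traceProd Y (W (t + 1)) k)

/-- The generalized single-factor JisstPCA iteration (Algorithm 6), with diagonal-core
updates `D⁽ᵗ⁺¹⁾ = Vᵀ(𝒳×₃u)V` used to weight the trace products. -/
def GJisstIter {p q N rx ry : ℕ} (X : Fin p → Fin p → Fin N → ℝ) (Y : Fin q → Fin q → Fin N → ℝ)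
    (lam : ℝ) (u : ℕ → Fin N → ℝ) (V : ℕ → Matrix (Fin p) (Fin rx) ℝ)
    (W : ℕ → Matrix (Fin q) (Fin ry) ℝ) : Prop :=
  ∀ t : ℕ,
    IsLeadingLeft (mode3 X (u t)) (V (t + 1)) ∧
    IsLeadingLeft (mode3 Y (u t)) (W (t + 1)) ∧
    u (t + 1) =
      unitize (fun k =>
        lam * traceProdD X (V (t + 1)) ((V (t + 1))ᵀ * mode3 X (u t) * V (t + 1)) k +
        (1 - lam) * traceProdD Y (W (t + 1)) ((W (t + 1))ᵀ * mode3 Y (u t) * W (t + 1)) k)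

/-- Integrated noise norm `‖λℰ_x; (1−λ)ℰ_y‖_{r_x,r_y,op}`. -/
def intNoiseNorm {p q N : ℕ} (lam : ℝ) (rx ry : ℕ) (Ex : Fin p → Fin p → Fin N → ℝ)
    (Ey : Fin q → Fin q → Fin N → ℝ) : ℝ :=
  sSup {x | ∃ (V : Matrix (Fin p) (Fin rx) ℝ) (W : Matrix (Fin q) (Fin ry) ℝ),
    Orth V ∧ Orth W ∧
    x = enorm2 (fun k => lam * traceProd Ex V k + (1 - lam) * traceProd Ey W k)}

/-- The column-concatenated matricization `[λ𝓜₃(𝒳), (1−λ)𝓜₃(𝒴)] ∈ ℝ^{N×(p²+q²)}`. -/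
def concatMat3 {p q N : ℕ} (lam : ℝ) (X : Fin p → Fin p → Fin N → ℝ)
    (Y : Fin q → Fin q → Fin N → ℝ) :
    Matrix (Fin N) ((Fin p × Fin p) ⊕ (Fin q × Fin q)) ℝ :=
  Matrix.of fun k => Sum.elim (fun ij => lam * X ij.1 ij.2 k) (fun ij => (1 - lam) * Y ij.1 ij.2 k)

/-- A real random variable is zero-mean and sub-Gaussian with parameter `σ`. -/
def SubGZero {Ω : Type*} [MeasurableSpace Ω] (μ : Measure Ω) (σ : ℝ) (f : Ω → ℝ) : Prop :=
  (∫ ω, f ω ∂μ) = 0 ∧ ∀ t : ℝ, (∫ ω, Real.exp (t * f ω) ∂μ) ≤ Real.exp (t ^ 2 * σ ^ 2 / 2)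

/-- The family of on-and-above-diagonal entries of the two random noise tensors. -/
def upperFam {Ω : Type*} {p q N : ℕ} (Ex : Ω → Fin p → Fin p → Fin N → ℝ)
    (Ey : Ω → Fin q → Fin q → Fin N → ℝ) :
    (({ij : Fin p × Fin p // ij.1 ≤ ij.2} × Fin N) ⊕
      ({ij : Fin q × Fin q // ij.1 ≤ ij.2} × Fin N)) → Ω → ℝ
  | Sum.inl x => fun ω => Ex ω x.1.1.1 x.1.1.2 x.2
  | Sum.inr x => fun ω => Ey ω x.1.1.1 x.1.1.2 x.2

/-- Sub-Gaussian noise assumption (Assumption 3.3): both noise tensors are semi-symmetric,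
their on-and-above-diagonal entries are jointly independent, zero-mean, sub-Gaussian-σ, and
the tslice-wise sums of entrywise variances do not depend on the tslice. -/
def SubGaussianNoise {Ω : Type*} [MeasurableSpace Ω] (μ : Measure Ω) {p q N : ℕ} (σ : ℝ)
    (Ex : Ω → Fin p → Fin p → Fin N → ℝ) (Ey : Ω → Fin q → Fin q → Fin N → ℝ) : Prop :=
  (∀ ω, SemiSym (Ex ω)) ∧ (∀ ω, SemiSym (Ey ω)) ∧
  (∀ i j k, Measurable fun ω => Ex ω i j k) ∧
  (∀ i j k, Measurable fun ω => Ey ω i j k) ∧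
  (∀ i j k, SubGZero μ σ fun ω => Ex ω i j k) ∧
  (∀ i j k, SubGZero μ σ fun ω => Ey ω i j k) ∧
  ProbabilityTheory.iIndepFun (upperFam Ex Ey) μ ∧
  (∀ k k' : Fin N, (∑ i, ∑ j, ∫ ω, (Ex ω i j k) ^ 2 ∂μ) = ∑ i, ∑ j, ∫ ω, (Ex ω i j k') ^ 2 ∂μ) ∧
  (∀ k k' : Fin N, (∑ i, ∑ j, ∫ ω, (Ey ω i j k) ^ 2 ∂μ) = ∑ i, ∑ j, ∫ ω, (Ey ω i j k') ^ 2 ∂μ)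



section AuxB1

variable {ι κ : Type*} [Fintype ι] [Fintype κ]

lemma enorm2_nonneg (v : ι → ℝ) : 0 ≤ enorm2 v := Real.sqrt_nonneg _

lemma enorm2_sq (v : ι → ℝ) : enorm2 v ^ 2 = ∑ i, v i ^ 2 :=
  Real.sq_sqrt (by positivity)

lemma enorm2_eq_norm (v : ι → ℝ) : enorm2 v = ‖(WithLp.equiv 2 (ι → ℝ)).symm v‖ := by
  rw [EuclideanSpace.norm_eq]
  simp [enorm2, Real.norm_eq_abs, sq_abs]

lemma enorm2_sub_le (x y : ι → ℝ) : enorm2 (x - y) ≤ enorm2 x + enorm2 y := by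
  simp only [enorm2_eq_norm]
  exact norm_sub_le _ _

lemma enorm2_mulVec_le (M : Matrix ι κ ℝ) (v : κ → ℝ) :
    enorm2 (M.mulVec v) ≤ frobNorm M * enorm2 v := by
  have hnn : 0 ≤ frobNorm M * enorm2 v := mul_nonneg (Real.sqrt_nonneg _) (enorm2_nonneg v)
  rw [enorm2, show frobNorm M * enorm2 v =
    Real.sqrt (frobNorm M * enorm2 v * (frobNorm M * enorm2 v)) from
      (Real.sqrt_mul_self hnn).symm]
  apply Real.sqrt_le_sqrt
  have h : ∀ i, (M.mulVec v i) ^ 2 ≤ (∑ j, M i j ^ 2) * ∑ j, v j ^ 2 := fun i =>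
    Finset.sum_mul_sq_le_sq_mul_sq Finset.univ (fun j => M i j) v
  calc ∑ i, M.mulVec v i ^ 2 ≤ ∑ i, (∑ j, M i j ^ 2) * ∑ j, v j ^ 2 :=
        Finset.sum_le_sum fun i _ => h i
    _ = (∑ i, ∑ j, M i j ^ 2) * ∑ j, v j ^ 2 := by rw [Finset.sum_mul]
    _ = frobNorm M * enorm2 v * (frobNorm M * enorm2 v) := by
        rw [mul_mul_mul_comm, frobNorm, enorm2,
          Real.mul_self_sqrt (by positivity), Real.mul_self_sqrt (by positivity)]

lemma mOpNorm_bddAbove (M : Matrix ι κ ℝ) :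
    BddAbove {x | ∃ v : κ → ℝ, enorm2 v = 1 ∧ x = enorm2 (M.mulVec v)} := by
  refine ⟨frobNorm M, fun x ⟨v, hv, hx⟩ => ?_⟩
  rw [hx]
  simpa [hv] using enorm2_mulVec_le M v

lemma le_mOpNorm (M : Matrix ι κ ℝ) {v : κ → ℝ} (hv : enorm2 v = 1) :
    enorm2 (M.mulVec v) ≤ mOpNorm M :=
  le_csSup (mOpNorm_bddAbove M) ⟨v, hv, rfl⟩

lemma mOpNorm_nonneg (M : Matrix ι κ ℝ) : 0 ≤ mOpNorm M :=
  Real.sSup_nonneg (fun _ ⟨_, _, hx⟩ => hx ▸ enorm2_nonneg _)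

lemma mOpNorm_le {M : Matrix ι κ ℝ} {c : ℝ} (hc : 0 ≤ c)
    (h : ∀ v : κ → ℝ, enorm2 v = 1 → enorm2 (M.mulVec v) ≤ c) : mOpNorm M ≤ c :=
  Real.sSup_le (fun _ ⟨v, hv, hx⟩ => hx ▸ h v hv) hc

lemma mOpNorm_sub_le (A B : Matrix ι κ ℝ) :
    mOpNorm (A - B) ≤ mOpNorm A + mOpNorm B := by
  refine mOpNorm_le (add_nonneg (mOpNorm_nonneg A) (mOpNorm_nonneg B)) fun v hv => ?_
  rw [Matrix.sub_mulVec]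
  exact (enorm2_sub_le _ _).trans (add_le_add (le_mOpNorm A hv) (le_mOpNorm B hv))

lemma frobNorm_le_sqrt_rank_mul [DecidableEq κ] (A : Matrix ι κ ℝ) :
    frobNorm A ≤ Real.sqrt (A.rank : ℝ) * mOpNorm A := by
  classical
  set B := Aᵀ * A with hBdef
  have hB : B.IsHermitian := by
    have := Matrix.isHermitian_conjTranspose_mul_self A
    rwa [Matrix.conjTranspose_eq_transpose_of_trivial] at this
  have htrace : B.trace = ∑ i, hB.eigenvalues i := by
    conv_lhs => rw [hB.spectral_theorem]
    rw [Unitary.conjStarAlgAut_apply, Matrix.trace_mul_cycle, Unitary.coe_star_mul_self, one_mul, Matrix.trace_diagonal]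
    simp
  have hbound : ∀ i, hB.eigenvalues i ≤ mOpNorm A ^ 2 := by
    intro i
    set v : κ → ℝ := ⇑(hB.eigenvectorBasis i) with hvdef
    have hv1 : enorm2 v = 1 := by
      rw [enorm2_eq_norm]
      exact hB.eigenvectorBasis.orthonormal.1 i
    have hev : B *ᵥ v = hB.eigenvalues i • v := hB.mulVec_eigenvectorBasis i
    have hvv : v ⬝ᵥ v = 1 := by
      have := enorm2_sq v
      rw [hv1] at this
      simpa [dotProduct, sq] using this.symm.trans (by norm_num)
    have h2 : v ⬝ᵥ (B *ᵥ v) = hB.eigenvalues i := by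
      rw [hev, dotProduct_smul, hvv, smul_eq_mul, mul_one]
    have h3 : v ⬝ᵥ (B *ᵥ v) = (A *ᵥ v) ⬝ᵥ (A *ᵥ v) := by
      rw [hBdef, ← Matrix.mulVec_mulVec, Matrix.dotProduct_mulVec, Matrix.vecMul_transpose]
    have h4 : hB.eigenvalues i = enorm2 (A *ᵥ v) ^ 2 := by
      rw [← h2, h3, enorm2_sq]
      simp [dotProduct, sq]
    rw [h4]
    exact pow_le_pow_left₀ (enorm2_nonneg _) (le_mOpNorm A hv1) 2
  have hsum : ∑ i, hB.eigenvalues i ≤ (A.rank : ℝ) * mOpNorm A ^ 2 := by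
    rw [← Finset.sum_filter_ne_zero Finset.univ]
    calc ∑ i ∈ Finset.univ.filter (fun i => hB.eigenvalues i ≠ 0), hB.eigenvalues i
        ≤ (Finset.univ.filter (fun i => hB.eigenvalues i ≠ 0)).card • (mOpNorm A ^ 2) :=
          Finset.sum_le_card_nsmul _ _ _ (fun i _ => hbound i)
      _ = (A.rank : ℝ) * mOpNorm A ^ 2 := by
          rw [nsmul_eq_mul]
          congr 2
          rw [← Matrix.rank_transpose_mul_self A, ← hBdef, hB.rank_eq_card_non_zero_eigs,
            Fintype.card_subtype]
  have hfrob : frobNorm A = Real.sqrt B.trace := by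
    rw [frobNorm]
    congr 1
    rw [Matrix.trace]
    simp only [Matrix.diag, hBdef, Matrix.mul_apply, Matrix.transpose_apply, sq]
    exact Finset.sum_comm
  rw [hfrob, htrace]
  calc Real.sqrt (∑ i, hB.eigenvalues i) ≤ Real.sqrt ((A.rank : ℝ) * mOpNorm A ^ 2) :=
        Real.sqrt_le_sqrt hsum
    _ = Real.sqrt (A.rank : ℝ) * mOpNorm A := by
        rw [Real.sqrt_mul (Nat.cast_nonneg _), Real.sqrt_sq (mOpNorm_nonneg A)]

lemma matrix_rank_neg (B : Matrix ι κ ℝ) : (-B).rank = B.rank := by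
  have h : LinearMap.range (-B).mulVecLin = LinearMap.range B.mulVecLin := by
    rw [show (-B).mulVecLin = -B.mulVecLin by ext v; simp [Matrix.neg_mulVec],
      LinearMap.range_neg]
  rw [Matrix.rank, Matrix.rank, h]

lemma matrix_rank_sub_le (A B : Matrix ι κ ℝ) : (A - B).rank ≤ A.rank + B.rank := by
  rw [sub_eq_add_neg, ← matrix_rank_neg B]
  rw [Matrix.rank, Matrix.rank, Matrix.rank, Matrix.mulVecLin_add]
  have hle : LinearMap.range (A.mulVecLin + (-B).mulVecLin) ≤
      LinearMap.range A.mulVecLin ⊔ LinearMap.range (-B).mulVecLin := by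
    rintro x ⟨y, rfl⟩
    exact Submodule.mem_sup.2 ⟨_, ⟨y, rfl⟩, _, ⟨y, rfl⟩, rfl⟩
  exact (Submodule.finrank_mono hle).trans
    (Submodule.finrank_add_le_finrank_add_finrank _ _)

end AuxB1

/-- Lemma B.1: Frobenius error of a best rank-`r` approximation of a perturbed
rank-`r` matrix. -/
theorem best_rank_r_approx_frobenius_error {m n r : ℕ}
    (Xs E : Matrix (Fin m) (Fin n) ℝ) (hrank : Xs.rank ≤ r)
    (Xr : Matrix (Fin m) (Fin n) ℝ) (hXr : Xr.rank ≤ r)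
    (hbest : ∀ M : Matrix (Fin m) (Fin n) ℝ, M.rank ≤ r →
      mOpNorm (Xs + E - Xr) ≤ mOpNorm (Xs + E - M)) :
    frobNorm (Xr - Xs) ≤ 2 * Real.sqrt (2 * (r : ℝ)) * mOpNorm E := by
  have h1 : mOpNorm (Xs + E - Xr) ≤ mOpNorm E := by
    have := hbest Xs hrank
    simpa using this
  have hdiff : Xr - Xs = E - (Xs + E - Xr) := by abel
  have h2 : mOpNorm (Xr - Xs) ≤ 2 * mOpNorm E := by
    rw [hdiff]
    calc mOpNorm (E - (Xs + E - Xr)) ≤ mOpNorm E + mOpNorm (Xs + E - Xr) :=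
          mOpNorm_sub_le _ _
      _ ≤ 2 * mOpNorm E := by linarith
  have hn : (Xr - Xs).rank ≤ 2 * r := (matrix_rank_sub_le Xr Xs).trans (by omega)
  have hrk : (((Xr - Xs).rank : ℕ) : ℝ) ≤ 2 * (r : ℝ) := by exact_mod_cast hn
  calc frobNorm (Xr - Xs) ≤ Real.sqrt ((Xr - Xs).rank : ℝ) * mOpNorm (Xr - Xs) :=
        frobNorm_le_sqrt_rank_mul _
    _ ≤ Real.sqrt (2 * (r : ℝ)) * (2 * mOpNorm E) :=
        mul_le_mul (Real.sqrt_le_sqrt hrk) h2 (mOpNorm_nonneg _) (Real.sqrt_nonneg _)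
    _ = 2 * Real.sqrt (2 * (r : ℝ)) * mOpNorm E := by ring


end
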